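/- Let q ≥ 3 be an integer, N = (q−2)/2 if q is even and N = q−2 if q is odd (assume N ≥ 1), and b_l (0 ≤ l ≤ N−1) as in the context. Let n ≥ 1 and 1 ≤ k ≤ min(n, N). Let κ : ℕ → ℝ be such that for every l with 1 ≤ l ≤ k−1: b_l − κ_{n−l} ≥ 1 if l ≠ (N−1)/2 or q is even, b_l − κ_{n−l} ≥ 0 if q = 5 and l = (N−1)/2, and b_l − κ_{n−l} ≥ −1 if q ≥ 7 is odd and l = (N−1)/2. Let γ : ℕ → ℝ be such that γ_i ≥ 0 for n−k+1 ≤ i ≤ n−1 and γ is monotone non-decreasing on these indices (γ_i ≤ γ_j whenever n−k+1 ≤ i ≤ j ≤ n−1). Then Σ_{l=1}^{k−1} (b_l − κ_{n−l})·γ_{n−l} ≥ 0. -/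
import Mathlib


/-- STATEMENT 13 (the paper's Lemma 4.2(d)), with the curvature bounds of Lemma 4.1 taken as
explicit hypotheses.  Here `N = (q-2)/2` for `q` even and `N = q-2` for `q` odd (`N ≥ 1`), and
`b l = 4/(q-2)` except `b ((N-1)/2) = 4/(q-2) - 2` when `q` is odd. -/
theorem sum_b_minus_kappa_gamma_nonneg (q : ℕ) (hq : 3 ≤ q)
    (N : ℕ) (hN : N = if Even q then (q - 2) / 2 else q - 2) (hN1 : 1 ≤ N)
    (b : ℕ → ℝ)
    (hb : ∀ l, l ≤ N - 1 →
      b l = if ¬ Even q ∧ l = (N - 1) / 2 then 4 / ((q : ℝ) - 2) - 2 else 4 / ((q : ℝ) - 2))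
    (n k : ℕ) (hn : 1 ≤ n) (hk1 : 1 ≤ k) (hk : k ≤ min n N)
    (κ : ℕ → ℝ)
    (hκ : ∀ l, 1 ≤ l → l ≤ k - 1 →
      ((Even q ∨ l ≠ (N - 1) / 2) → 1 ≤ b l - κ (n - l)) ∧
      (q = 5 → l = (N - 1) / 2 → 0 ≤ b l - κ (n - l)) ∧
      (¬ Even q → 7 ≤ q → l = (N - 1) / 2 → -1 ≤ b l - κ (n - l)))
    (γ : ℕ → ℝ)
    (hγ0 : ∀ i, n - k + 1 ≤ i → i ≤ n - 1 → 0 ≤ γ i)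
    (hγmono : ∀ i j, n - k + 1 ≤ i → i ≤ j → j ≤ n - 1 → γ i ≤ γ j) :
    0 ≤ ∑ l ∈ Finset.Icc 1 (k - 1), (b l - κ (n - l)) * γ (n - l) := by
  have hkn : k ≤ n := le_trans hk (min_le_left _ _)
  have hkN : k ≤ N := le_trans hk (min_le_right _ _)
  set l₀ := (N - 1) / 2 with hl₀
  have hγ : ∀ l, 1 ≤ l → l ≤ k - 1 → 0 ≤ γ (n - l) := fun l h1 h2 =>
    hγ0 _ (by omega) (by omega)
  by_cases hcase : ¬ Even q ∧ 7 ≤ q ∧ (1 ≤ l₀ ∧ l₀ ≤ k - 1)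
  · obtain ⟨hodd, hq7, hm1, hm2⟩ := hcase
    have hNq : N = q - 2 := by rw [hN, if_neg hodd]
    have hl2 : 2 ≤ l₀ := by omega
    have hsub : ({l₀ - 1, l₀} : Finset ℕ) ⊆ Finset.Icc 1 (k - 1) := by
      intro x hx
      simp only [Finset.mem_insert, Finset.mem_singleton] at hx
      rcases hx with h | h <;> simp [Finset.mem_Icc] <;> omega
    rw [← Finset.sum_sdiff hsub]
    have h1 : 0 ≤ ∑ l ∈ Finset.Icc 1 (k - 1) \ {l₀ - 1, l₀},
        (b l - κ (n - l)) * γ (n - l) := by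
      apply Finset.sum_nonneg
      intro l hl
      simp only [Finset.mem_sdiff, Finset.mem_Icc, Finset.mem_insert,
        Finset.mem_singleton] at hl
      have hc := (hκ l hl.1.1 hl.1.2).1 (Or.inr (by omega))
      exact mul_nonneg (by linarith) (hγ l hl.1.1 hl.1.2)
    have h2 : 0 ≤ ∑ l ∈ ({l₀ - 1, l₀} : Finset ℕ), (b l - κ (n - l)) * γ (n - l) := by
      rw [Finset.sum_pair (by omega)]
      have e1 : 1 ≤ b (l₀ - 1) - κ (n - (l₀ - 1)) :=
        (hκ (l₀ - 1) (by omega) (by omega)).1 (Or.inr (by omega))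
      have e2 : -1 ≤ b l₀ - κ (n - l₀) :=
        (hκ l₀ hm1 hm2).2.2 hodd hq7 rfl
      have g1 : 0 ≤ γ (n - (l₀ - 1)) := hγ _ (by omega) (by omega)
      have g2 : 0 ≤ γ (n - l₀) := hγ _ hm1 hm2
      have gm : γ (n - l₀) ≤ γ (n - (l₀ - 1)) :=
        hγmono _ _ (by omega) (by omega) (by omega)
      have t1 : 1 * γ (n - (l₀ - 1)) ≤ (b (l₀ - 1) - κ (n - (l₀ - 1))) * γ (n - (l₀ - 1)) :=
        mul_le_mul_of_nonneg_right e1 g1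
      have t2 : (-1) * γ (n - l₀) ≤ (b l₀ - κ (n - l₀)) * γ (n - l₀) :=
        mul_le_mul_of_nonneg_right e2 g2
      nlinarith
    linarith
  · apply Finset.sum_nonneg
    intro l hl
    simp only [Finset.mem_Icc] at hl
    have hγl := hγ l hl.1 hl.2
    by_cases hEl : Even q ∨ l ≠ l₀
    · have hc := (hκ l hl.1 hl.2).1 hEl
      exact mul_nonneg (by linarith) hγl
    · push_neg at hEl
      obtain ⟨hodd, hll⟩ := hEl
      have hNq : N = q - 2 := by rw [hN, if_neg hodd]
      have hq7 : ¬ 7 ≤ q := by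
        intro h7
        exact hcase ⟨hodd, h7, by omega, by omega⟩
      have hqodd : q % 2 = 1 := Nat.odd_iff.mp (Nat.not_even_iff_odd.mp hodd)
      have hq5 : q = 5 := by omega
      have hc := (hκ l hl.1 hl.2).2.1 hq5 hll
      exact mul_nonneg hc hγl
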